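/- For N ≥ 2 and any integers s, m, the N×N matrix A(N,s,m) has determinant 1. -/
import Mathlib


/-- The three-parameter MIXMAX matrix `A(N,s,m)` (indices `i j : Fin N` are 0-based,
corresponding to the 1-based indices `i+1, j+1` of the paper). -/
def mixmaxMatrix3 (N : ℕ) (s m : ℤ) : Matrix (Fin N) (Fin N) ℤ :=
  Matrix.of fun i j =>
    if i.val = 0 then 1
    else if j.val = 0 then 1
    else if i.val < j.val then 1
    else if i = j then 2
    else if i.val = 2 ∧ j.val = 1 then m + 2 + s
    else ((i.val : ℤ) - (j.val : ℤ)) * m + 2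

/-- Lower triangular factor. -/
def mmL (N : ℕ) (s m : ℤ) : Matrix (Fin N) (Fin N) ℤ :=
  Matrix.of fun i j =>
    if i = j then 1
    else if i.val < j.val then 0
    else if j.val = 0 then 1
    else if i.val = 2 ∧ j.val = 1 then m + 1 + s
    else ((i.val : ℤ) - (j.val : ℤ)) * m + 1

/-- Upper triangular factor. -/
def mmU (N : ℕ) : Matrix (Fin N) (Fin N) ℤ :=
  Matrix.of fun i j => if i.val = 0 then 1 else if i = j then 1 else 0

lemma mm_factor (N : ℕ) (hN : 2 ≤ N) (s m : ℤ) :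
    mixmaxMatrix3 N s m = mmL N s m * mmU N := by
  have hNpos : 0 < N := by omega
  ext i j
  rw [Matrix.mul_apply]
  have key : ∀ k : Fin N, mmL N s m i k * mmU N k j =
      (if k = (⟨0, hNpos⟩ : Fin N) then mmL N s m i ⟨0, hNpos⟩ else 0) +
      (if 0 < j.val ∧ k = j then mmL N s m i j else 0) := by
    intro k
    simp only [mmU, Matrix.of_apply]
    by_cases hk0 : k.val = 0
    · have hk : k = (⟨0, hNpos⟩ : Fin N) := by ext; simpa using hk0
      subst hk
      by_cases hj : 0 < j.val
      · have : ¬((⟨0, hNpos⟩ : Fin N) = j) := by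
          intro h; rw [← h] at hj; simp at hj
        simp [hj, this]
      · have hj0 : j = (⟨0, hNpos⟩ : Fin N) := by ext; omega
        subst hj0
        simp
    · simp only [hk0, if_false]
      have hkne : ¬ (k = (⟨0, hNpos⟩ : Fin N)) := by
        intro h; rw [h] at hk0; simp at hk0
      by_cases hkj : k = j
      · subst hkj
        have : 0 < k.val := by omega
        simp [hkne, this]
      · simp [hkne, hkj]
  rw [Finset.sum_congr rfl (fun k _ => key k), Finset.sum_add_distrib]
  rw [Finset.sum_ite_eq' Finset.univ]
  have : (∑ k : Fin N, if 0 < j.val ∧ k = j then mmL N s m i j else 0) =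
      if 0 < j.val then mmL N s m i j else 0 := by
    by_cases hj : 0 < j.val
    · simp [hj, Finset.sum_ite_eq' Finset.univ]
    · simp [hj]
  rw [this]
  simp only [Finset.mem_univ, if_true]
  have hL0 : mmL N s m i ⟨0, hNpos⟩ = 1 := by
    by_cases h : i = (⟨0, hNpos⟩ : Fin N)
    · simp [mmL, h]
    · have h2 : ¬ i.val < (⟨0, hNpos⟩ : Fin N).val := by simp
      simp only [mmL, Matrix.of_apply, if_neg h, if_neg h2]
      simp
  rw [hL0]
  simp only [mixmaxMatrix3, mmL, Matrix.of_apply, Fin.ext_iff]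
  split_ifs <;> (first | ring1 | omega | (exfalso; omega))

lemma mmL_det (N : ℕ) (s m : ℤ) : (mmL N s m).det = 1 := by
  rw [Matrix.det_of_lowerTriangular]
  · simp [mmL]
  · intro i j hij
    have h1 : i.val < j.val := hij
    have h2 : ¬ (i = j) := by
      intro h; subst h; omega
    simp only [mmL, Matrix.of_apply, if_neg h2, if_pos h1]

lemma mmU_det (N : ℕ) : (mmU N).det = 1 := by
  rw [Matrix.det_of_upperTriangular]
  · have : ∀ i : Fin N, mmU N i i = 1 := by
      intro i
      simp [mmU]
    simp [this]
  · intro i j hij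
    have h0 : j.val < i.val := hij
    have h1 : ¬ (i.val = 0) := by omega
    have h2 : ¬ (i = j) := by
      intro h; subst h; omega
    simp [mmU, h1, h2]

theorem stmt16 (N : ℕ) (hN : 2 ≤ N) (s m : ℤ) : (mixmaxMatrix3 N s m).det = 1 := by
  rw [mm_factor N hN s m, Matrix.det_mul, mmL_det, mmU_det, mul_one]
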